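/- Let a1, a2, a3, a4, a5, a6, a7 be positive real numbers with a1 > a3, and define g4 = δq + b + a6, x7 = a4a7, P4 = λ_o[a1(v_s(δq + a2) + λ(δ + b) + r(λ + a3 − δq)) + (δ + b)(a3(b + a1 + a6) + a2(a1 − a3)) + a3 r g4], and P̃4 = α_o a4[v_s a1 + (δ + b)(a1 − a3)] − x7 a1(r + δ + b). If α_o a4 + λ_o a2 > λ_o(r + δp + b) and λ_o(λ + v_s + b) > x7, then P4 + P̃4 > 0. -/
import Mathlib


/-- The Routh–Hurwitz condition `P₄ + P̃₄ > 0` at the endemic steady state of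
model (2), given `α₀a₄ + λ₀a₂ > λ₀(r + δp + b)` and `λ₀(λ + v_s + b) > x₇`. -/
theorem P4_plus_P4tilde_pos
    (lam b r lamo alphao delta vs p q : ℝ)
    (hlam : 0 < lam) (hb : 0 < b) (hr : 0 < r) (hlamo : 0 < lamo)
    (halphao : 0 < alphao) (hdelta : 0 < delta) (hvs : 0 < vs)
    (hp0 : 0 ≤ p) (hp1 : p ≤ 1) (hq : q = 1 - p)
    (a1 a2 a3 a4 a5 a6 a7 : ℝ)
    (ha1 : 0 < a1) (ha2 : 0 < a2) (ha3 : 0 < a3) (ha4 : 0 < a4)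
    (ha5 : 0 < a5) (ha6 : 0 < a6) (ha7 : 0 < a7)
    (ha13 : a1 > a3)
    (g4 x7 P4 P4t : ℝ)
    (hg4 : g4 = delta * q + b + a6)
    (hx7 : x7 = a4 * a7)
    (hP4 : P4 = lamo * (a1 * (vs * (delta * q + a2) + lam * (delta + b)
        + r * (lam + a3 - delta * q))
      + (delta + b) * (a3 * (b + a1 + a6) + a2 * (a1 - a3)) + a3 * r * g4))
    (hP4t : P4t = alphao * a4 * (vs * a1 + (delta + b) * (a1 - a3))
      - x7 * a1 * (r + delta + b))
    (h1 : alphao * a4 + lamo * a2 > lamo * (r + delta * p + b))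
    (h2 : lamo * (lam + vs + b) > x7) :
    P4 + P4t > 0 := by
  have hM : 0 < vs * a1 + (delta + b) * (a1 - a3) := by
    nlinarith [mul_pos hvs ha1, mul_nonneg (by positivity : (0:ℝ) ≤ delta + b) (sub_nonneg.2 ha13.le)]
  have h1' : 0 < alphao * a4 + lamo * a2 - lamo * (r + delta * p + b) := by linarith
  have h2' : 0 < lamo * (lam + vs + b) - x7 := by linarith
  have hA : 0 < a1 * (r + delta + b) := by positivity
  subst hq hg4 hP4 hP4t
  nlinarith [mul_pos h1' hM, mul_pos h2' hA,
    mul_pos hlamo (mul_pos (mul_pos ha1 ha3) (by positivity : (0:ℝ) < b + delta + r)),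
    mul_pos hlamo (mul_pos (mul_pos ha3 ha6) (by positivity : (0:ℝ) < b + delta + r)),
    mul_nonneg (mul_nonneg hlamo.le (mul_nonneg hdelta.le hp0))
      (mul_nonneg (sub_nonneg.2 ha13.le) (by positivity : (0:ℝ) ≤ b + delta + r))]
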